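/- Let H be a rooted path on h vertices with root o at one end, G a finite graph, and Δ ≥ 0. Then Σ_{φ ∈ Hom(H,G)} 1[d_{φ(o)} ≥ Δ] ≤ Σ_{v ∈ V(G)} d_v^{h−1} 1[d_v ≥ Δ]. -/

import Mathlib

open Finset SimpleGraph
open scoped Classical

section Aux

variable {VG : Type*} [Fintype VG]

/-- The homomorphism condition from the path graph on `n` vertices. -/
private def pc (G : SimpleGraph VG) (n : ℕ) (φ : Fin n → VG) : Prop :=
  ∀ a b, (pathGraph n).Adj a b → G.Adj (φ a) (φ b)

private lemma pc_iff (G : SimpleGraph VG) (n : ℕ) (φ : Fin n → VG) :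
    pc G n φ ↔ ∀ i : ℕ, ∀ hi : i + 1 < n,
      G.Adj (φ ⟨i, Nat.lt_of_succ_lt hi⟩) (φ ⟨i + 1, hi⟩) := by
  constructor
  · intro h i hi
    exact h _ _ (by rw [pathGraph_adj]; left; rfl)
  · intro h a b hab
    rw [pathGraph_adj] at hab
    rcases hab with hab | hab
    · have := h a.val (by omega)
      have ha : (⟨a.val, by omega⟩ : Fin n) = a := rfl
      have hb : (⟨a.val + 1, by omega⟩ : Fin n) = b := Fin.ext (by simp [hab])
      rwa [ha, hb] at this
    · have := h b.val (by omega)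
      have hb : (⟨b.val, by omega⟩ : Fin n) = b := rfl
      have ha : (⟨b.val + 1, by omega⟩ : Fin n) = a := Fin.ext (by simp [hab])
      rw [hb, ha] at this
      exact this.symm

/-- Number of homomorphisms of the path on `m+1` vertices with prescribed endpoints. -/
private noncomputable def pcount (G : SimpleGraph VG) (m : ℕ) (u v : VG) : ℕ :=
  (univ.filter (fun φ : Fin (m + 1) → VG =>
    pc G (m + 1) φ ∧ φ 0 = u ∧ φ (Fin.last m) = v)).card

private lemma pcount_zero (G : SimpleGraph VG) (u v : VG) :
    pcount G 0 u v = if u = v then 1 else 0 := by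
  unfold pcount
  split_ifs with huv
  · subst huv
    rw [Finset.card_eq_one]
    refine ⟨fun _ => u, ?_⟩
    ext φ
    simp only [Finset.mem_filter, Finset.mem_univ, true_and, Finset.mem_singleton]
    constructor
    · rintro ⟨-, h0, -⟩
      funext i
      have hi : i = 0 := Fin.ext (Nat.lt_one_iff.mp i.isLt)
      rw [hi, h0]
    · rintro rfl
      refine ⟨?_, rfl, rfl⟩
      intro a b hab
      rw [pathGraph_adj] at hab
      have ha := a.isLt
      have hb := b.isLt
      omega
  · rw [Finset.card_eq_zero, Finset.filter_eq_empty_iff]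
    rintro φ - ⟨-, h0, hl⟩
    exact huv (by rw [← h0, ← hl]; rfl)

private lemma pcount_symm (G : SimpleGraph VG) (m : ℕ) (u v : VG) :
    pcount G m u v = pcount G m v u := by
  unfold pcount
  refine Finset.card_nbij' (fun φ => φ ∘ Fin.rev) (fun φ => φ ∘ Fin.rev) ?_ ?_ ?_ ?_
  · intro φ hφ
    simp only [Finset.mem_coe, Finset.mem_filter, Finset.mem_univ, true_and] at hφ ⊢
    obtain ⟨hp, h0, hl⟩ := hφ
    refine ⟨?_, ?_, ?_⟩
    · intro a b hab
      apply hp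
      rw [pathGraph_adj] at hab ⊢
      have ha := a.isLt; have hb := b.isLt
      rw [Fin.val_rev, Fin.val_rev]
      omega
    · show φ (Fin.rev 0) = v
      rw [Fin.rev_zero, hl]
    · show φ (Fin.rev (Fin.last m)) = u
      rw [Fin.rev_last, h0]
  · intro φ hφ
    simp only [Finset.mem_coe, Finset.mem_filter, Finset.mem_univ, true_and] at hφ ⊢
    obtain ⟨hp, h0, hl⟩ := hφ
    refine ⟨?_, ?_, ?_⟩
    · intro a b hab
      apply hp
      rw [pathGraph_adj] at hab ⊢
      have ha := a.isLt; have hb := b.isLt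
      rw [Fin.val_rev, Fin.val_rev]
      omega
    · show φ (Fin.rev 0) = u
      rw [Fin.rev_zero, hl]
    · show φ (Fin.rev (Fin.last m)) = v
      rw [Fin.rev_last, h0]
  · intro φ hφ
    funext i
    show φ (Fin.rev (Fin.rev i)) = φ i
    rw [Fin.rev_rev]
  · intro φ hφ
    funext i
    show φ (Fin.rev (Fin.rev i)) = φ i
    rw [Fin.rev_rev]

private lemma snoc_comp {m : ℕ} (φ : Fin (m + 2) → VG) (v : VG)
    (hl : φ (Fin.last (m + 1)) = v) : Fin.snoc (φ ∘ Fin.castSucc) v = φ := by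
  funext i
  induction i using Fin.lastCases with
  | last => rw [Fin.snoc_last]; exact hl.symm
  | cast i => rw [Fin.snoc_castSucc]; rfl

private lemma comp_snoc {m : ℕ} (ψ : Fin (m + 1) → VG) (v : VG) :
    (Fin.snoc ψ v : Fin (m + 2) → VG) ∘ Fin.castSucc = ψ := by
  funext i
  simp [Fin.snoc_castSucc]

private lemma pcount_fiber (G : SimpleGraph VG) (m : ℕ) (u v w : VG) :
    (univ.filter (fun φ : Fin (m + 2) → VG =>
      (pc G (m + 2) φ ∧ φ 0 = u ∧ φ (Fin.last (m + 1)) = v) ∧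
        φ (Fin.castSucc (Fin.last m)) = w)).card
      = if G.Adj w v then pcount G m u w else 0 := by
  split_ifs with hadj
  · unfold pcount
    refine Finset.card_nbij' (fun φ => φ ∘ Fin.castSucc)
      (fun ψ => Fin.snoc ψ v) ?_ ?_ ?_ ?_
    · intro φ hφ
      simp only [Finset.mem_coe, Finset.mem_filter, Finset.mem_univ, true_and] at hφ ⊢
      obtain ⟨⟨hp, h0, hl⟩, hw⟩ := hφ
      refine ⟨?_, ?_, hw⟩
      · rw [pc_iff] at hp ⊢
        intro i hi
        exact hp i (by omega)
      · show φ (Fin.castSucc 0) = u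
        rwa [Fin.castSucc_zero]
    · intro ψ hψ
      simp only [Finset.mem_coe, Finset.mem_filter, Finset.mem_univ, true_and] at hψ ⊢
      obtain ⟨hp, h0, hl⟩ := hψ
      refine ⟨⟨?_, ?_, ?_⟩, ?_⟩
      · rw [pc_iff] at hp ⊢
        intro i hi
        rcases Nat.lt_or_ge (i + 1) (m + 1) with hi' | hi'
        · have e1 : (⟨i, Nat.lt_of_succ_lt hi⟩ : Fin (m + 2))
              = Fin.castSucc ⟨i, Nat.lt_of_succ_lt hi'⟩ := rfl
          have e2 : (⟨i + 1, hi⟩ : Fin (m + 2)) = Fin.castSucc ⟨i + 1, hi'⟩ := rfl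
          rw [e1, e2, Fin.snoc_castSucc, Fin.snoc_castSucc]
          exact hp i hi'
        · have him : i = m := by omega
          have e1 : (⟨i, Nat.lt_of_succ_lt hi⟩ : Fin (m + 2))
              = Fin.castSucc (Fin.last m) := Fin.ext (by simp [him])
          have e2 : (⟨i + 1, hi⟩ : Fin (m + 2)) = Fin.last (m + 1) := Fin.ext (by simp [him])
          rw [e1, e2, Fin.snoc_castSucc, Fin.snoc_last, hl]
          exact hadj
      · rw [← Fin.castSucc_zero, Fin.snoc_castSucc]
        exact h0
      · rw [Fin.snoc_last]
      · rw [Fin.snoc_castSucc]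
        exact hl
    · intro φ hφ
      simp only [Finset.mem_coe, Finset.mem_filter, Finset.mem_univ, true_and] at hφ
      obtain ⟨⟨hp, h0, hl⟩, hw⟩ := hφ
      exact snoc_comp φ v hl
    · intro ψ hψ
      exact comp_snoc ψ v
  · rw [Finset.card_eq_zero, Finset.filter_eq_empty_iff]
    rintro φ - ⟨⟨hp, h0, hl⟩, hw⟩
    rw [pc_iff] at hp
    have := hp m (by omega)
    apply hadj
    have e1 : (⟨m, by omega⟩ : Fin (m + 2)) = Fin.castSucc (Fin.last m) := rfl
    have e2 : (⟨m + 1, by omega⟩ : Fin (m + 2)) = Fin.last (m + 1) := rfl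
    rwa [e1, e2, hw, hl] at this

private lemma pcount_succ (G : SimpleGraph VG) (m : ℕ) (u v : VG) :
    pcount G (m + 1) u v = ∑ w : VG, if G.Adj w v then pcount G m u w else 0 := by
  have hmap : ∀ φ ∈ (univ.filter (fun φ : Fin (m + 2) → VG =>
      pc G (m + 2) φ ∧ φ 0 = u ∧ φ (Fin.last (m + 1)) = v)),
      φ (Fin.castSucc (Fin.last m)) ∈ (univ : Finset VG) := fun _ _ => Finset.mem_univ _
  rw [pcount, Finset.card_eq_sum_card_fiberwise hmap]
  refine Finset.sum_congr rfl fun w _ => ?_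
  rw [Finset.filter_filter]
  exact pcount_fiber G m u v w

private lemma deg_sum (G : SimpleGraph VG) (w : VG) :
    ∑ v : VG, (if G.Adj w v then (1 : ℕ) else 0) = G.degree w := by
  rw [SimpleGraph.degree, SimpleGraph.neighborFinset_eq_filter, Finset.card_filter]

/-- Chebyshev-type correlation inequality for a symmetric nonnegative kernel. -/
private lemma cheb (μ : VG → VG → ℕ) (hsym : ∀ u v, μ u v = μ v u)
    (g d : VG → ℕ) (hmono : ∀ u v, d u ≤ d v → g u ≤ g v) :
    ∑ u : VG, ∑ v : VG, μ u v * (g u * d v) ≤ ∑ u : VG, ∑ v : VG, μ u v * (g u * d u) := by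
  have key : ∀ u v, μ u v * (g u * d v) + μ u v * (g v * d u)
      ≤ μ u v * (g u * d u) + μ u v * (g v * d v) := by
    intro u v
    have H : g u * d v + g v * d u ≤ g u * d u + g v * d v := by
      rcases le_total (d u) (d v) with hd | hd
      · have hg := hmono u v hd
        nlinarith
      · have hg := hmono v u hd
        nlinarith
    calc μ u v * (g u * d v) + μ u v * (g v * d u)
        = μ u v * (g u * d v + g v * d u) := by ring
      _ ≤ μ u v * (g u * d u + g v * d v) := Nat.mul_le_mul_left _ H
      _ = μ u v * (g u * d u) + μ u v * (g v * d v) := by ring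
  have swap1 : ∑ u : VG, ∑ v : VG, μ u v * (g u * d v)
      = ∑ u : VG, ∑ v : VG, μ u v * (g v * d u) := by
    rw [Finset.sum_comm]
    exact Finset.sum_congr rfl fun u _ => Finset.sum_congr rfl fun v _ => by rw [hsym]
  have swap2 : ∑ u : VG, ∑ v : VG, μ u v * (g u * d u)
      = ∑ u : VG, ∑ v : VG, μ u v * (g v * d v) := by
    rw [Finset.sum_comm]
    exact Finset.sum_congr rfl fun u _ => Finset.sum_congr rfl fun v _ => by rw [hsym]
  have h2 : ∑ u : VG, ∑ v : VG, (μ u v * (g u * d v) + μ u v * (g v * d u))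
      ≤ ∑ u : VG, ∑ v : VG, (μ u v * (g u * d u) + μ u v * (g v * d v)) :=
    Finset.sum_le_sum fun u _ => Finset.sum_le_sum fun v _ => key u v
  simp only [Finset.sum_add_distrib] at h2
  rw [← swap1, ← swap2] at h2
  linarith

private lemma main_ineq (G : SimpleGraph VG) (Δ : ℕ) :
    ∀ m j : ℕ,
      (∑ u : VG, ∑ v : VG,
          ((if Δ ≤ G.degree u then 1 else 0) * G.degree u ^ j) * pcount G m u v)
        ≤ ∑ u : VG, (if Δ ≤ G.degree u then 1 else 0) * G.degree u ^ (j + m) := by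
  intro m
  induction m with
  | zero =>
    intro j
    apply le_of_eq
    refine Finset.sum_congr rfl fun u _ => ?_
    rw [Nat.add_zero]
    simp [pcount_zero, mul_ite, Finset.sum_ite_eq]
  | succ m ih =>
    intro j
    have step1 : (∑ u : VG, ∑ v : VG,
          ((if Δ ≤ G.degree u then 1 else 0) * G.degree u ^ j) * pcount G (m + 1) u v)
        = ∑ u : VG, ∑ w : VG, pcount G m u w *
            (((if Δ ≤ G.degree u then 1 else 0) * G.degree u ^ j) * G.degree w) := by
      refine Finset.sum_congr rfl fun u _ => ?_
      calc ∑ v : VG, ((if Δ ≤ G.degree u then 1 else 0) * G.degree u ^ j) * pcount G (m + 1) u v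
          = ∑ v : VG, ∑ w : VG, (if G.Adj w v then
              ((if Δ ≤ G.degree u then 1 else 0) * G.degree u ^ j) * pcount G m u w else 0) := by
            refine Finset.sum_congr rfl fun v _ => ?_
            rw [pcount_succ, Finset.mul_sum]
            refine Finset.sum_congr rfl fun w _ => ?_
            rw [mul_ite, mul_zero]
        _ = ∑ w : VG, ∑ v : VG, (if G.Adj w v then
              ((if Δ ≤ G.degree u then 1 else 0) * G.degree u ^ j) * pcount G m u w else 0) :=
            Finset.sum_comm
        _ = ∑ w : VG, pcount G m u w *
              (((if Δ ≤ G.degree u then 1 else 0) * G.degree u ^ j) * G.degree w) := by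
            refine Finset.sum_congr rfl fun w _ => ?_
            calc ∑ v : VG, (if G.Adj w v then
                  ((if Δ ≤ G.degree u then 1 else 0) * G.degree u ^ j) * pcount G m u w else 0)
                = ∑ v : VG, (((if Δ ≤ G.degree u then 1 else 0) * G.degree u ^ j) *
                    pcount G m u w) * (if G.Adj w v then 1 else 0) := by
                  refine Finset.sum_congr rfl fun v _ => ?_
                  rw [mul_ite, mul_one, mul_zero]
              _ = (((if Δ ≤ G.degree u then 1 else 0) * G.degree u ^ j) *
                    pcount G m u w) * G.degree w := by rw [← Finset.mul_sum, deg_sum]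
              _ = pcount G m u w *
                    (((if Δ ≤ G.degree u then 1 else 0) * G.degree u ^ j) * G.degree w) := by
                  ring
    have hmono : ∀ u v : VG, G.degree u ≤ G.degree v →
        (if Δ ≤ G.degree u then 1 else 0) * G.degree u ^ j
          ≤ (if Δ ≤ G.degree v then 1 else 0) * G.degree v ^ j := by
      intro u v hd
      refine Nat.mul_le_mul ?_ (Nat.pow_le_pow_left hd j)
      split_ifs with h1 h2
      · exact le_rfl
      · exact absurd (le_trans h1 hd) h2
      · exact Nat.zero_le _
      · exact le_rfl
    have step2 : (∑ u : VG, ∑ w : VG, pcount G m u w *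
            (((if Δ ≤ G.degree u then 1 else 0) * G.degree u ^ j) * G.degree w))
        ≤ ∑ u : VG, ∑ w : VG, pcount G m u w *
            (((if Δ ≤ G.degree u then 1 else 0) * G.degree u ^ j) * G.degree u) :=
      cheb (pcount G m) (pcount_symm G m)
        (fun u => (if Δ ≤ G.degree u then 1 else 0) * G.degree u ^ j)
        (fun w => G.degree w) hmono
    have step3 : (∑ u : VG, ∑ w : VG, pcount G m u w *
            (((if Δ ≤ G.degree u then 1 else 0) * G.degree u ^ j) * G.degree u))
        = ∑ u : VG, ∑ w : VG,
            ((if Δ ≤ G.degree u then 1 else 0) * G.degree u ^ (j + 1)) * pcount G m u w := by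
      refine Finset.sum_congr rfl fun u _ => Finset.sum_congr rfl fun w _ => ?_
      rw [pow_succ]
      ring
    have step4 := ih (j + 1)
    rw [show j + 1 + m = j + (m + 1) from by omega] at step4
    calc (∑ u : VG, ∑ v : VG,
          ((if Δ ≤ G.degree u then 1 else 0) * G.degree u ^ j) * pcount G (m + 1) u v)
        = _ := step1
      _ ≤ _ := step2
      _ = _ := step3
      _ ≤ _ := step4

end Aux

/-- Truncated Sidorenko inequality for paths: for the path `P_h` rooted at its
endpoint `o = 0`, `∑_{φ ∈ Hom(P_h,G)} 1[d_{φ(o)} ≥ Δ] ≤ ∑_v d_v^(h-1) 1[d_v ≥ Δ]`. -/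
theorem truncated_sidorenko_path
    {VG : Type*} [Fintype VG] (G : SimpleGraph VG)
    (h : ℕ) (hh : 1 ≤ h) (Δ : ℕ) :
    (Finset.univ.filter
      (fun φ : Fin h → VG =>
        (∀ a b, (SimpleGraph.pathGraph h).Adj a b → G.Adj (φ a) (φ b)) ∧
        Δ ≤ G.degree (φ ⟨0, by omega⟩))).card
      ≤ ∑ v : VG, if Δ ≤ G.degree v then (G.degree v) ^ (h - 1) else 0 := by
  obtain ⟨k, rfl⟩ : ∃ k, h = k + 1 := ⟨h - 1, by omega⟩
  have hmap : ∀ φ ∈ (Finset.univ.filter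
      (fun φ : Fin (k + 1) → VG =>
        (∀ a b, (SimpleGraph.pathGraph (k + 1)).Adj a b → G.Adj (φ a) (φ b)) ∧
        Δ ≤ G.degree (φ ⟨0, by omega⟩))),
      (φ 0, φ (Fin.last k)) ∈ (Finset.univ : Finset (VG × VG)) := fun _ _ => Finset.mem_univ _
  rw [Finset.card_eq_sum_card_fiberwise hmap, Fintype.sum_prod_type]
  have h00 : ∀ φ : Fin (k + 1) → VG, φ (⟨0, by omega⟩ : Fin (k + 1)) = φ 0 := by
    intro φ
    congr 1
  have hfib : ∀ u v : VG,
      ((Finset.univ.filter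
        (fun φ : Fin (k + 1) → VG =>
          (∀ a b, (SimpleGraph.pathGraph (k + 1)).Adj a b → G.Adj (φ a) (φ b)) ∧
          Δ ≤ G.degree (φ ⟨0, by omega⟩))).filter
        (fun φ => (φ 0, φ (Fin.last k)) = (u, v))).card
      = ((if Δ ≤ G.degree u then 1 else 0) * G.degree u ^ 0) * pcount G k u v := by
    intro u v
    rw [Finset.filter_filter, pow_zero, mul_one]
    split_ifs with hΔ
    · rw [one_mul]
      unfold pcount
      congr 1
      apply Finset.filter_congr
      intro φ _
      simp only [Prod.mk.injEq]
      constructor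
      · rintro ⟨⟨hp, -⟩, h0, hl⟩
        exact ⟨hp, h0, hl⟩
      · rintro ⟨hp, h0, hl⟩
        exact ⟨⟨hp, by rw [h00 φ, h0]; exact hΔ⟩, h0, hl⟩
    · rw [zero_mul, Finset.card_eq_zero, Finset.filter_eq_empty_iff]
      rintro φ - ⟨⟨-, hdeg⟩, hprod⟩
      rw [Prod.mk.injEq] at hprod
      rw [h00 φ, hprod.1] at hdeg
      exact hΔ hdeg
  calc (∑ u : VG, ∑ v : VG,
        ((Finset.univ.filter
          (fun φ : Fin (k + 1) → VG =>
            (∀ a b, (SimpleGraph.pathGraph (k + 1)).Adj a b → G.Adj (φ a) (φ b)) ∧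
            Δ ≤ G.degree (φ ⟨0, by omega⟩))).filter
          (fun φ => (φ 0, φ (Fin.last k)) = (u, v))).card)
      = ∑ u : VG, ∑ v : VG,
          ((if Δ ≤ G.degree u then 1 else 0) * G.degree u ^ 0) * pcount G k u v := by
        exact Finset.sum_congr rfl fun u _ => Finset.sum_congr rfl fun v _ => hfib u v
    _ ≤ ∑ u : VG, (if Δ ≤ G.degree u then 1 else 0) * G.degree u ^ (0 + k) :=
        main_ineq G Δ k 0
    _ = ∑ v : VG, if Δ ≤ G.degree v then (G.degree v) ^ (k + 1 - 1) else 0 := by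
        refine Finset.sum_congr rfl fun u _ => ?_
        rw [Nat.zero_add, Nat.add_sub_cancel]
        split_ifs <;> simp
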